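/- Let G be a simple graph with n vertices and m edges and incidence matrix A. If some permutation π = (ℓ_1,...,ℓ_n) of the columns of A satisfies cons1(π(A)) ≤ 2m − (n−1), then v_{ℓ_1},v_{ℓ_2},...,v_{ℓ_n} is a Hamiltonian path in G, i.e., {v_{ℓ_i}, v_{ℓ_{i+1}}} ∈ E(G) for all 1 ≤ i ≤ n−1. -/

import Mathlib

open Finset

/-- Extend a row of length `n` by zeros to an `ℕ`-indexed row. -/
def rowExt (n : ℕ) (r : Fin n → Bool) : ℕ → Bool :=
  fun j => if h : j < n then r ⟨j, h⟩ else false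

/-- The number of maximal blocks of consecutive ones in a row. -/
def cons1Row (n : ℕ) (r : Fin n → Bool) : ℕ :=
  ((Finset.range n).filter
    (fun j => rowExt n r j = true ∧ (j = 0 ∨ rowExt n r (j - 1) = false))).card

/-- The total number of maximal blocks of consecutive ones in a binary matrix. -/
def cons1 {m n : ℕ} (A : Fin m → Fin n → Bool) : ℕ :=
  ∑ i, cons1Row n (A i)

/-- Append a column of zeros to the right of a binary matrix. -/
def appendZero {m n : ℕ} (A : Fin m → Fin n → Bool) : Fin m → Fin (n + 1) → Bool :=
  fun i j => if h : (j : ℕ) < n then A i ⟨j, h⟩ else false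

/-- Hamming distance between two columns of a binary matrix. -/
def colHam {m N : ℕ} (B : Fin m → Fin N → Bool) (a b : Fin N) : ℕ :=
  hammingDist (fun i => B i a) (fun i => B i b)

/-- The sym2 pair of consecutive vertices in the ordering `ℓ`. -/
def consPair {n : ℕ} (ℓ : Equiv.Perm (Fin n)) (i : ℕ) (h : i + 1 < n) : Sym2 (Fin n) :=
  s(ℓ ⟨i, Nat.lt_of_succ_lt h⟩, ℓ ⟨i + 1, h⟩)

lemma cons1Row_pair {n : ℕ} (r : Fin n → Bool) (p q : Fin n) (hpq : (p : ℕ) < (q : ℕ))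
    (hr : ∀ i, r i = true ↔ i = p ∨ i = q) :
    cons1Row n r = if (q : ℕ) = (p : ℕ) + 1 then 1 else 2 := by
  have hp := p.isLt
  have hq := q.isLt
  have hrow : ∀ j, rowExt n r j = true ↔ (j = (p : ℕ) ∨ j = (q : ℕ)) := by
    intro j
    unfold rowExt
    split
    case isTrue hlt => rw [hr]; simp [Fin.ext_iff]
    case isFalse hlt =>
      simp only [Bool.false_eq_true, false_iff]
      omega
  have hrowf : ∀ j, (rowExt n r j = false) ↔ ¬ (j = (p : ℕ) ∨ j = (q : ℕ)) := by
    intro j; rw [← hrow j]; cases rowExt n r j <;> simp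
  unfold cons1Row
  have hset : (Finset.range n).filter
      (fun j => rowExt n r j = true ∧ (j = 0 ∨ rowExt n r (j - 1) = false)) =
      if (q : ℕ) = (p : ℕ) + 1 then {(p : ℕ)} else {(p : ℕ), (q : ℕ)} := by
    split
    case isTrue hc =>
      ext j
      simp only [Finset.mem_filter, Finset.mem_range, Finset.mem_singleton, hrow, hrowf]
      omega
    case isFalse hc =>
      ext j
      simp only [Finset.mem_filter, Finset.mem_range, Finset.mem_insert,
        Finset.mem_singleton, hrow, hrowf]
      omega
  rw [hset]
  split
  · simp
  · rw [Finset.card_pair (by omega)]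

lemma consPair_congr {n : ℕ} (ℓ : Equiv.Perm (Fin n)) {i1 i2 : ℕ}
    (h1 : i1 + 1 < n) (h2 : i2 + 1 < n) (h : i1 = i2) :
    consPair ℓ i1 h1 = consPair ℓ i2 h2 := by subst h; rfl

open Classical in
lemma row_core {n : ℕ} (r : Fin n → Bool) (p q : Fin n) (hpq : (p : ℕ) < (q : ℕ))
    (hr : ∀ i, r i = true ↔ i = p ∨ i = q) (s : Sym2 (Fin n)) (ℓ : Equiv.Perm (Fin n))
    (hs : s = s(ℓ p, ℓ q)) :
    cons1Row n r = if (∃ i h, s = consPair ℓ i h) then 1 else 2 := by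
  rw [cons1Row_pair r p q hpq hr]
  have hq := q.isLt
  have hiff : ((q : ℕ) = (p : ℕ) + 1) ↔ (∃ i h, s = consPair ℓ i h) := by
    constructor
    · intro hq1
      refine ⟨(p : ℕ), by omega, ?_⟩
      have hq2 : q = ⟨(p : ℕ) + 1, by omega⟩ := Fin.ext hq1
      rw [hs, consPair]
      exact congrArg (fun x => s(ℓ p, ℓ x)) hq2
    · rintro ⟨i, hi, hpr⟩
      rw [hs] at hpr
      unfold consPair at hpr
      rw [Sym2.eq_iff] at hpr
      rcases hpr with ⟨h1, h2⟩ | ⟨h1, h2⟩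
      · have e1 := ℓ.injective h1
        have e2 := ℓ.injective h2
        rw [Fin.ext_iff] at e1 e2
        simp only at e1 e2
        omega
      · have e1 := ℓ.injective h1
        have e2 := ℓ.injective h2
        rw [Fin.ext_iff] at e1 e2
        simp only at e1 e2
        omega
  exact if_congr hiff rfl rfl

/-- If a column permutation π of the incidence matrix of G satisfies
cons1(π(A)) ≤ 2m − (n−1), then v_{ℓ_1},...,v_{ℓ_n} is a Hamiltonian path in G. -/
theorem stmt2 (n m : ℕ) (G : SimpleGraph (Fin n)) (e : Fin m ≃ G.edgeSet)
    (A : Fin m → Fin n → Bool)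
    (hA : ∀ j i, A j i = true ↔ i ∈ (e j : Sym2 (Fin n)))
    (ℓ : Equiv.Perm (Fin n))
    (h : (cons1 (fun j i => A j (ℓ i)) : ℤ) ≤ 2 * (m : ℤ) - ((n : ℤ) - 1)) :
    ∀ i : ℕ, (hi : i + 1 < n) → G.Adj (ℓ ⟨i, by omega⟩) (ℓ ⟨i + 1, hi⟩) := by
  classical
  set P : Fin m → Prop := fun j => ∃ i hi, (e j : Sym2 (Fin n)) = consPair ℓ i hi with hP
  have rowval : ∀ j : Fin m,
      cons1Row n (fun i => A j (ℓ i)) = if P j then 1 else 2 := by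
    intro j
    obtain ⟨a, b, hab⟩ : ∃ a b, (e j : Sym2 (Fin n)) = s(a, b) :=
      Sym2.ind (fun x y => ⟨x, y, rfl⟩) (e j : Sym2 (Fin n))
    have hadj : G.Adj a b := by
      have := (e j).2
      rw [hab, SimpleGraph.mem_edgeSet] at this
      exact this
    have hne : a ≠ b := hadj.ne
    have hsupp : ∀ i, (A j (ℓ i) = true) ↔ i = ℓ.symm a ∨ i = ℓ.symm b := by
      intro i
      rw [hA, hab, Sym2.mem_iff, Equiv.apply_eq_iff_eq_symm_apply,
        Equiv.apply_eq_iff_eq_symm_apply]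
    have hne' : ((ℓ.symm a : ℕ)) ≠ ((ℓ.symm b : ℕ)) := by
      intro hh
      exact hne (ℓ.symm.injective (Fin.ext hh) ▸ rfl)
    rcases lt_or_gt_of_ne hne' with hlt | hlt
    · exact row_core _ _ _ hlt hsupp ((e j : Sym2 (Fin n))) ℓ (by rw [hab]; simp)
    · refine row_core _ (ℓ.symm b) (ℓ.symm a) hlt ?_ ((e j : Sym2 (Fin n))) ℓ
        (by rw [hab, Sym2.eq_swap]; simp)
      intro i; rw [hsupp i, or_comm]
  have hsum : cons1 (fun j i => A j (ℓ i)) + (Finset.univ.filter P).card = 2 * m := by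
    unfold cons1
    rw [Finset.card_filter]
    rw [Finset.sum_congr rfl (fun j _ => rowval j), ← Finset.sum_add_distrib]
    have : ∀ j : Fin m, ((if P j then 1 else 2) + (if P j then 1 else 0)) = 2 := by
      intro j; split <;> rfl
    rw [Finset.sum_congr rfl (fun j _ => this j), Finset.sum_const, Finset.card_univ,
      Fintype.card_fin, smul_eq_mul, Nat.mul_comm]
  have hcardJ : n - 1 ≤ (Finset.univ.filter P).card := by omega
  set I : Finset ℕ := (Finset.range (n - 1)).filter
    (fun i => ∃ hi : i + 1 < n, consPair ℓ i hi ∈ G.edgeSet) with hI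
  have hJI : (Finset.univ.filter P).card ≤ I.card := by
    apply Finset.card_le_card_of_injOn
      (fun j => if hj : P j then Classical.choose hj else 0)
    · intro j hj
      have hjP : P j := (Finset.mem_filter.mp hj).2
      obtain ⟨hi, heq⟩ := Classical.choose_spec hjP
      simp only [dif_pos hjP, hI, Finset.mem_coe, Finset.mem_filter, Finset.mem_range]
      exact ⟨by omega, hi, heq ▸ (e j).2⟩
    · intro j1 hj1 j2 hj2 heq
      have hP1 : P j1 := by simpa using hj1
      have hP2 : P j2 := by simpa using hj2
      simp only [dif_pos hP1, dif_pos hP2] at heq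
      obtain ⟨h1, e1⟩ := Classical.choose_spec hP1
      obtain ⟨h2, e2⟩ := Classical.choose_spec hP2
      apply e.injective
      apply Subtype.ext
      rw [e1, e2]
      exact consPair_congr ℓ h1 h2 heq
  have hIeq : I = Finset.range (n - 1) := by
    apply Finset.eq_of_subset_of_card_le (Finset.filter_subset _ _)
    rw [Finset.card_range]
    exact le_trans hcardJ hJI
  intro i hi
  have hiI : i ∈ I := by rw [hIeq]; exact Finset.mem_range.mpr (by omega)
  obtain ⟨hi', hmem⟩ := (Finset.mem_filter.mp hiI).2
  rw [consPair, SimpleGraph.mem_edgeSet] at hmem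
  exact hmem
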